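/- Let M be a regular symmetric Hadamard matrix with constant diagonal of order n, with diagonal value δ. Define a simple graph G on the n row indices by making two distinct indices i and j adjacent if and only if M i j ≠ δ (i.e., replace all entries of M equal to the diagonal value by 0 and the remaining entries by 1, and take the result as an adjacency matrix). Then G is a strongly regular graph: there exist parameters k, λ, μ such that G is strongly regular with parameters (n,k,λ,μ). -/

import Mathlib

/-- `M` is a regular symmetric Hadamard matrix with constant diagonal (RSHCD) with diagonal
value `δ ∈ {−1,1}` and sign `ε ∈ {−1,1}`: a symmetric `±1`-matrix with `M Mᵀ = n I`,
constant diagonal `δ`, and all row sums equal to `δ ε √n`. -/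
def IsRSHCD {m : Type*} [Fintype m] [DecidableEq m]
    (M : Matrix m m ℝ) (δ ε : ℝ) : Prop :=
  M.IsSymm ∧ (∀ i j, M i j = 1 ∨ M i j = -1) ∧
    M * M.transpose = (Fintype.card m : ℝ) • (1 : Matrix m m ℝ) ∧
    (δ = 1 ∨ δ = -1) ∧ (∀ i, M i i = δ) ∧
    (ε = 1 ∨ ε = -1) ∧
    ∀ i, ∑ j, M i j = δ * ε * Real.sqrt (Fintype.card m)

open scoped Classical in
/-- The graph obtained from an RSHCD `M` of order `n` by joining two distinct indices `i, j`
iff `M i j ≠ δ` (replace entries equal to the diagonal value by 0 and the rest by 1) is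
strongly regular for some parameters `(n, k, λ, μ)`. -/
theorem rshcd_graph_is_strongly_regular (n : ℕ) (M : Matrix (Fin n) (Fin n) ℝ)
    (δ ε : ℝ) (hM : IsRSHCD M δ ε)
    (G : SimpleGraph (Fin n))
    (hG : ∀ i j : Fin n, G.Adj i j ↔ i ≠ j ∧ M i j ≠ δ) :
    ∃ k l μ : ℕ, G.IsSRGWith n k l μ := by
  classical
  obtain ⟨hsym, hpm, hmul, hδ, hdiag, hε, hrow⟩ := hM
  rcases Nat.lt_or_ge n 2 with h2 | h2
  · -- trivial cases n = 0, 1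
    interval_cases n
    · exact ⟨0, 0, 0, ⟨rfl, fun v => v.elim0, fun v => v.elim0,
        fun v => v.elim0⟩⟩
    · refine ⟨0, 0, 0, ⟨rfl, fun v => ?_, fun v w h => ?_, fun v w hvw => ?_⟩⟩
      · have : ∀ w, ¬ G.Adj v w := fun w h => h.ne (Subsingleton.elim v w)
        simp [SimpleGraph.degree, SimpleGraph.neighborFinset, SimpleGraph.neighborSet, this]
        ext w; simp; exact fun hw => this w (Set.mem_toFinset.mp hw)
      · exact absurd (Subsingleton.elim v w) h.ne
      · exact absurd (Subsingleton.elim v w) hvw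
  have hδ2 : δ * δ = 1 := by rcases hδ with h | h <;> simp [h]
  set s : ℝ := Real.sqrt n with hs
  set A := G.adjMatrix ℝ with hAdef
  have hA : ∀ i j, A i j = (1 - δ * M i j) / 2 := by
    intro i j
    by_cases hij : i = j
    · subst hij
      have : A i i = 0 := by simp [hAdef]
      rw [this, hdiag i, hδ2]; norm_num
    · by_cases hadj : G.Adj i j
      · have hm : M i j = -δ := by
          have h1 := ((hG i j).mp hadj).2
          rcases hpm i j with h | h <;> rcases hδ with h' | h' <;>
            simp_all
        have : A i j = 1 := by simp [hAdef, hadj]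
        rw [this, hm, mul_neg, hδ2]; norm_num
      · have hm : M i j = δ := by
          by_contra hc
          exact hadj ((hG i j).mpr ⟨hij, hc⟩)
        have : A i j = 0 := by simp [hAdef, hadj]
        rw [this, hm, hδ2]; norm_num
  have hrowsum : ∀ i, ∑ j, M i j = δ * ε * s := by
    intro i; simpa [hs] using hrow i
  have hcolsum : ∀ j, ∑ i, M i j = δ * ε * s := by
    intro j
    calc ∑ i, M i j = ∑ i, M j i := by
          exact Finset.sum_congr rfl fun i _ => hsym.apply j i
      _ = δ * ε * s := hrowsum j
  have hMM : ∀ i j, ∑ l, M i l * M l j = if i = j then (n : ℝ) else 0 := by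
    intro i j
    have h := congrFun (congrFun hmul i) j
    simp only [Matrix.mul_apply, Matrix.transpose_apply, Matrix.smul_apply,
      Matrix.one_apply, Fintype.card_fin, smul_eq_mul] at h
    calc ∑ l, M i l * M l j = ∑ l, M i l * M j l := by
          exact Finset.sum_congr rfl fun l _ => by rw [hsym.apply l j]
      _ = if i = j then (n : ℝ) else 0 := by
          rw [h]; by_cases hij : i = j <;> simp [hij]
  have key : ∀ i j, (A * A) i j
      = ((n : ℝ) - 2 * ε * s) / 4 + (if i = j then (n : ℝ) / 4 else 0) := by
    intro i j
    rw [Matrix.mul_apply]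
    have hterm : ∀ l, A i l * A l j
        = (1 - δ * M i l - δ * M l j + M i l * M l j) / 4 := by
      intro l
      rw [hA i l, hA l j]
      linear_combination (M i l * M l j / 4) * hδ2
    calc ∑ l, A i l * A l j
        = ∑ l, (1 - δ * M i l - δ * M l j + M i l * M l j) / 4 :=
          Finset.sum_congr rfl fun l _ => hterm l
      _ = ((n : ℝ) - δ * (δ * ε * s) - δ * (δ * ε * s)
            + (if i = j then (n : ℝ) else 0)) / 4 := by
          rw [← Finset.sum_div]
          congr 1
          rw [Finset.sum_add_distrib, Finset.sum_sub_distrib, Finset.sum_sub_distrib,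
            ← Finset.mul_sum, ← Finset.mul_sum, hrowsum i, hcolsum j, hMM i j]
          simp
      _ = ((n : ℝ) - 2 * ε * s) / 4 + (if i = j then (n : ℝ) / 4 else 0) := by
          by_cases hij : i = j <;> simp only [hij, if_true, if_false] <;>
            linear_combination (-(ε * s) / 2) * hδ2
  -- degrees
  have hdeg : ∀ i, (G.degree i : ℝ) = ((n : ℝ) - 2 * ε * s) / 4 + (n : ℝ) / 4 := by
    intro i
    have := G.adjMatrix_mul_self_apply_self (α := ℝ) i
    rw [← hAdef] at this
    rw [← this, key i i, if_pos rfl]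
  have hcom : ∀ i j, i ≠ j →
      (Fintype.card (G.commonNeighbors i j) : ℝ) = ((n : ℝ) - 2 * ε * s) / 4 := by
    intro i j hij
    have h1 := G.adjMatrix_pow_apply_eq_card_walk (α := ℝ) 2 i j
    simp only [Set.coe_setOf] at h1
    rw [Fintype.card_congr (G.walkLengthTwoEquivCommonNeighbors i j)] at h1
    rw [← hAdef, sq, key i j, if_neg hij, add_zero] at h1
    exact h1.symm
  -- assemble
  have h0 : (0 : ℕ) < n := by omega
  set i₀ : Fin n := ⟨0, h0⟩
  set j₀ : Fin n := ⟨1, by omega⟩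
  have hne : i₀ ≠ j₀ := by simp [i₀, j₀, Fin.ext_iff]
  refine ⟨G.degree i₀, Fintype.card (G.commonNeighbors i₀ j₀),
    Fintype.card (G.commonNeighbors i₀ j₀),
    ⟨Fintype.card_fin n, fun v => ?_, fun v w hvw => ?_, fun v w hvw _ => ?_⟩⟩
  · have : (G.degree v : ℝ) = (G.degree i₀ : ℝ) := by rw [hdeg, hdeg]
    exact_mod_cast this
  · have : (Fintype.card (G.commonNeighbors v w) : ℝ)
        = (Fintype.card (G.commonNeighbors i₀ j₀) : ℝ) := by
      rw [hcom v w hvw.ne, hcom i₀ j₀ hne]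
    exact_mod_cast this
  · have : (Fintype.card (G.commonNeighbors v w) : ℝ)
        = (Fintype.card (G.commonNeighbors i₀ j₀) : ℝ) := by
      rw [hcom v w hvw, hcom i₀ j₀ hne]
    exact_mod_cast this
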